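/- arXiv:2311.11600 — 4 statements merged into one kernel-verified Lean document; each statement's English description precedes it below -/
import Mathlib

section
/- Let V be a real vector space, P : V → V a linear map with P ∘ P = P (idempotent), c : ℕ → ℝ a function with c t ≠ 0 for every t, and x, z : ℕ → V sequences such that for every s ≥ 1 one has x (s-1) = (c (s-1) / c s) • (x s - P (x s)) + z s. Then for every anchor index t and every k with 1 ≤ k ≤ t, the closed-form parallel-sampling identity holds: x (t-k) = (c (t-k) / c t) • (x t - P (x t)) + P (z (t-k+1)) + ∑_{s = t-k}^{t-1} (c (t-k) / c s) • (z (s+1) - P (z (s+1))). -/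
/-- Abstract core of Proposition 1 (Parallel sampling): if a sequence satisfies the
linear recursion `x (s-1) = (c (s-1) / c s) • (x s - P (x s)) + z s` for an idempotent
linear map `P` and a nonvanishing function `c`, then the closed-form parallel-sampling
identity holds. -/
theorem parallel_sampling_abstract
    {V : Type*} [AddCommGroup V] [Module ℝ V]
    (P : V →ₗ[ℝ] V) (hP : P ∘ₗ P = P)
    (c : ℕ → ℝ) (hc : ∀ t, c t ≠ 0)
    (x z : ℕ → V)
    (hrec : ∀ s : ℕ, 1 ≤ s →
      x (s - 1) = (c (s - 1) / c s) • (x s - P (x s)) + z s) :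
    ∀ t k : ℕ, 1 ≤ k → k ≤ t →
      x (t - k) =
        (c (t - k) / c t) • (x t - P (x t)) + P (z (t - k + 1))
          + ∑ s ∈ Finset.Icc (t - k) (t - 1),
              (c (t - k) / c s) • (z (s + 1) - P (z (s + 1))) := by
  have hPP : ∀ v, P (P v) = P v := fun v => by
    have := congrArg (fun f : V →ₗ[ℝ] V => f v) hP
    simpa using this
  intro t k hk1
  induction hk1 with
  | refl =>
    intro ht
    have h := hrec t (by omega)
    have e : t - 1 + 1 = t := by omega
    rw [Finset.Icc_self, Finset.sum_singleton, e, div_self (hc (t - 1)), one_smul, h]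
    abel
  | step hk1 IH =>
    rename_i k
    intro ht
    have IH' := IH (by omega)
    have hrec' := hrec (t - k) (by omega)
    have e1 : t - k - 1 = t - (k + 1) := by omega
    have e2 : t - (k + 1) + 1 = t - k := by omega
    rw [e1] at hrec'
    have key : x (t - k) - P (x (t - k)) =
        (c (t - k) / c t) • (x t - P (x t))
          + ∑ s ∈ Finset.Icc (t - k) (t - 1),
              (c (t - k) / c s) • (z (s + 1) - P (z (s + 1))) := by
      rw [IH']
      simp [map_add, map_smul, map_sub, map_sum, hPP]
      abel
    rw [key] at hrec'
    rw [smul_add, Finset.smul_sum] at hrec'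
    have hcancel : ∀ s, (c (t - (k + 1)) / c (t - k)) * (c (t - k) / c s)
        = c (t - (k + 1)) / c s := fun s => by
      rw [div_mul_div_comm, mul_comm (c (t - (k + 1))), mul_div_mul_left _ _ (hc (t - k))]
    simp only [smul_smul, hcancel] at hrec'
    rw [hrec']
    rw [e2]
    have hins : Finset.Icc (t - (k + 1)) (t - 1)
        = insert (t - (k + 1)) (Finset.Icc (t - k) (t - 1)) := by
      rw [← Finset.insert_Icc_add_one_left_eq_Icc (by omega), e2]
    rw [hins, Finset.sum_insert (by simp [Finset.mem_Icc]; omega)]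
    rw [div_self (hc (t - (k + 1))), one_smul, e2]
    abel
end

section
/- Let A be an m × n real matrix and A⁺ an n × m real matrix satisfying A * A⁺ * A = A. Let ᾱ : ℕ → ℝ be strictly positive, let 0 ≤ η < 1, let y ∈ ℝ^m, let ε_θ : ℝ^n × ℕ → ℝ^n be any function, and let ε : ℕ → ℝ^n. For s ≥ 1 set α s := ᾱ s / ᾱ (s-1), c¹ s := √(1 - ᾱ s) · η, c² s := √(1 - ᾱ s) · √(1 - η²), and z s := c² s • ε_θ (x s, s) - √((1 - ᾱ s)/α s) • (ε_θ (x s, s) - A⁺ A ε_θ (x s, s)) + √(ᾱ (s-1)) • A⁺ y + c¹ s • ε s. Suppose the sequence x : ℕ → ℝ^n satisfies, for every s ≥ 1, the projected DDIM update x (s-1) = √(ᾱ (s-1)) • x̂₀|s + c² s • ε_θ (x s, s) + c¹ s • ε s, where x₀|s := (1/√(ᾱ s)) • (x s - √(1 - ᾱ s) • ε_θ (x s, s)) and x̂₀|s := A⁺ y + (x₀|s - A⁺ A x₀|s). Then for every T and every k with 1 ≤ k ≤ T: x (T-k) = (√(ᾱ (T-k))/√(ᾱ T)) • (x T - A⁺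 A (x T)) + A⁺ A (z (T-k+1)) + ∑_{s = T-k}^{T-1} (√(ᾱ (T-k))/√(ᾱ s)) • (z (s+1) - A⁺ A (z (s+1))). -/
/-- Proposition 1 (Parallel sampling): for the projected DDIM update with
range–null space correction (DDNM), under the Moore–Penrose identity
`A * A⁺ * A = A`, the state `x (T-k)` admits a closed form in terms of
`x T` and the additive terms `z`. -/
theorem parallel_sampling_prop1
    {m n : ℕ}
    (A : Matrix (Fin m) (Fin n) ℝ) (Ap : Matrix (Fin n) (Fin m) ℝ)
    (hA : A * Ap * A = A)
    (ab : ℕ → ℝ) (hab : ∀ t, 0 < ab t)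
    (η : ℝ) (hη0 : 0 ≤ η) (hη1 : η < 1)
    (y : Fin m → ℝ)
    (εθ : (Fin n → ℝ) → ℕ → (Fin n → ℝ))
    (ε : ℕ → (Fin n → ℝ))
    (x : ℕ → (Fin n → ℝ))
    (z : ℕ → (Fin n → ℝ))
    -- definition of the additive term z s for s ≥ 1
    (hz : ∀ s : ℕ, 1 ≤ s →
      z s = (Real.sqrt (1 - ab s) * Real.sqrt (1 - η ^ 2)) • εθ (x s) s
        - Real.sqrt ((1 - ab s) / (ab s / ab (s - 1))) •
            (εθ (x s) s - Ap.mulVec (A.mulVec (εθ (x s) s)))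
        + Real.sqrt (ab (s - 1)) • Ap.mulVec y
        + (Real.sqrt (1 - ab s) * η) • ε s)
    -- the projected DDIM update:
    -- x (s-1) = √(ab (s-1)) • x̂₀|s + c² s • ε_θ(x s, s) + c¹ s • ε s,
    -- where x₀|s = (1/√(ab s)) • (x s - √(1 - ab s) • ε_θ(x s, s)) and
    -- x̂₀|s = A⁺ y + (x₀|s - A⁺ A x₀|s)
    (hx : ∀ s : ℕ, 1 ≤ s →
      x (s - 1) =
        Real.sqrt (ab (s - 1)) •
          (Ap.mulVec y +
            ((1 / Real.sqrt (ab s)) •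
                (x s - Real.sqrt (1 - ab s) • εθ (x s) s)
              - Ap.mulVec (A.mulVec
                  ((1 / Real.sqrt (ab s)) •
                    (x s - Real.sqrt (1 - ab s) • εθ (x s) s)))))
        + (Real.sqrt (1 - ab s) * Real.sqrt (1 - η ^ 2)) • εθ (x s) s
        + (Real.sqrt (1 - ab s) * η) • ε s) :
    ∀ T k : ℕ, 1 ≤ k → k ≤ T →
      x (T - k) =
        (Real.sqrt (ab (T - k)) / Real.sqrt (ab T)) •
            (x T - Ap.mulVec (A.mulVec (x T)))
          + Ap.mulVec (A.mulVec (z (T - k + 1)))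
          + ∑ s ∈ Finset.Icc (T - k) (T - 1),
              (Real.sqrt (ab (T - k)) / Real.sqrt (ab s)) •
                (z (s + 1) - Ap.mulVec (A.mulVec (z (s + 1)))) := by
  set M := Ap * A with hMdef
  have hM : M * M = M := by
    show (Ap * A) * (Ap * A) = Ap * A
    rw [Matrix.mul_assoc, ← Matrix.mul_assoc A Ap A, hA]
  simp only [Matrix.mulVec_mulVec, ← hMdef] at hz hx ⊢
  have hMv : ∀ v : Fin n → ℝ, M.mulVec (M.mulVec v) = M.mulVec v := by
    intro v; rw [Matrix.mulVec_mulVec, hM]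
  have hM0 : ∀ v : Fin n → ℝ, M.mulVec (v - M.mulVec v) = 0 := by
    intro v; rw [Matrix.mulVec_sub, hMv, sub_self]
  have hRpos : ∀ t, 0 < Real.sqrt (ab t) := fun t => Real.sqrt_pos.mpr (hab t)
  have hRne : ∀ t, Real.sqrt (ab t) ≠ 0 := fun t => (hRpos t).ne'
  -- key one-step recursion
  have key : ∀ s : ℕ, 1 ≤ s →
      x (s - 1) = (Real.sqrt (ab (s - 1)) / Real.sqrt (ab s)) •
          (x s - M.mulVec (x s)) + z s := by
    intro s hs
    rw [hx s hs, hz s hs]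
    have hc : Real.sqrt ((1 - ab s) / (ab s / ab (s - 1)))
        = Real.sqrt (1 - ab s) * (Real.sqrt (ab (s - 1)) / Real.sqrt (ab s)) := by
      rw [div_div_eq_mul_div, mul_div_assoc,
        Real.sqrt_mul' _ (le_of_lt (div_pos (hab _) (hab _))),
        Real.sqrt_div (le_of_lt (hab _))]
    rw [hc]
    simp only [Matrix.mulVec_smul, Matrix.mulVec_sub, smul_sub, smul_add, smul_smul]
    module
  intro T k hk
  induction k, hk using Nat.le_induction with
  | base =>
    intro hT
    have h1 : T - 1 + 1 = T := by omega
    rw [key T hT, Finset.Icc_self, Finset.sum_singleton, div_self (hRne (T - 1)),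
      one_smul]
    simp only [h1]
    abel
  | succ k hk ih =>
    intro hkT
    have hTk : 1 ≤ T - k := by omega
    have h1 : T - (k + 1) = T - k - 1 := by omega
    have h2 : T - k - 1 + 1 = T - k := by omega
    rw [h1, key (T - k) hTk, ih (by omega), h2]
    have hsplit : Finset.Icc (T - k - 1) (T - 1)
        = insert (T - k - 1) (Finset.Icc (T - k) (T - 1)) := by
      ext i; simp only [Finset.mem_Icc, Finset.mem_insert]; omega
    rw [hsplit, Finset.sum_insert (by simp only [Finset.mem_Icc]; omega),
      div_self (hRne (T - k - 1)), one_smul]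
    -- simplify M.mulVec of the big sum
    have hMsum : M.mulVec (∑ s ∈ Finset.Icc (T - k) (T - 1),
        (Real.sqrt (ab (T - k)) / Real.sqrt (ab s)) •
          (z (s + 1) - M.mulVec (z (s + 1)))) = 0 := by
      rw [show (M.mulVec : (Fin n → ℝ) → (Fin n → ℝ)) = M.mulVecLin from rfl]
      rw [map_sum]
      refine Finset.sum_eq_zero fun s _ => ?_
      simp [Matrix.mulVecLin_apply, Matrix.mulVec_smul, hM0]
    simp only [Matrix.mulVec_add, Matrix.mulVec_smul, hM0, hMv, hMsum, smul_zero,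
      add_zero, zero_add]
    have hre : ∀ a b c : Fin n → ℝ, a + b + c - b = a + c := fun a b c => by abel
    rw [hre, smul_add, Finset.smul_sum, smul_smul,
      div_mul_div_cancel₀ (hRne (T - k))]
    have hsum : ∀ s ∈ Finset.Icc (T - k) (T - 1),
        (Real.sqrt (ab (T - k - 1)) / Real.sqrt (ab (T - k))) •
          ((Real.sqrt (ab (T - k)) / Real.sqrt (ab s)) •
            (z (s + 1) - M.mulVec (z (s + 1))))
        = (Real.sqrt (ab (T - k - 1)) / Real.sqrt (ab s)) •
            (z (s + 1) - M.mulVec (z (s + 1))) := by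
      intro s _
      rw [smul_smul, div_mul_div_cancel₀ (hRne (T - k))]
    rw [Finset.sum_congr rfl hsum]
    simp only [h2]
    abel
end

section
/- Let A be an m × n real matrix, A⁺ an n × m real matrix, ᾱ : ℕ → ℝ strictly positive, 0 ≤ η < 1, y ∈ ℝ^m, e ∈ ℝ^n (the predicted noise ε_θ(x_s, s)), w ∈ ℝ^n (the stochastic noise ε_s), and x_s ∈ ℝ^n. For s ≥ 1 set α s := ᾱ s / ᾱ (s-1), c¹ s := √(1 - ᾱ s) · η, c² s := √(1 - ᾱ s) · √(1 - η²), x₀|s := (1/√(ᾱ s)) • (x_s - √(1 - ᾱ s) • e), and x̂₀|s := A⁺ y + (x₀|s - A⁺ A x₀|s). Then the single DDIM update equals the projected linear recursion: √(ᾱ (s-1)) • x̂₀|s + c² s • e + c¹ s • w = (√(ᾱ (s-1))/√(ᾱ s)) • (x_s - A⁺ A x_s) + z s, where z s := c² s • e - √((1 - ᾱ s)/α s) • (e - A⁺ A e) + √(ᾱ (s-1)) • A⁺ y + c¹ s • w. -/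
/-- Key one-step algebraic identity in the proof of Proposition 1: a single DDIM
reverse step applied to the range–null space corrected estimate
`x̂₀|s = A⁺ y + (I - A⁺A) x₀|s` equals the projected linear recursion
`(√(ᾱ(s-1))/√(ᾱ s)) • (I - A⁺A) x_s + z s`. -/
theorem ddim_one_step_projected_identity
    {m n : ℕ}
    (A : Matrix (Fin m) (Fin n) ℝ) (Ap : Matrix (Fin n) (Fin m) ℝ)
    (ab : ℕ → ℝ) (hab : ∀ t, 0 < ab t)
    (η : ℝ) (hη0 : 0 ≤ η) (hη1 : η < 1)
    (y : Fin m → ℝ) (e w xs : Fin n → ℝ)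
    (s : ℕ) (hs : 1 ≤ s) :
    Real.sqrt (ab (s - 1)) •
        (Ap.mulVec y +
          ((1 / Real.sqrt (ab s)) • (xs - Real.sqrt (1 - ab s) • e)
            - Ap.mulVec (A.mulVec
                ((1 / Real.sqrt (ab s)) • (xs - Real.sqrt (1 - ab s) • e)))))
      + (Real.sqrt (1 - ab s) * Real.sqrt (1 - η ^ 2)) • e
      + (Real.sqrt (1 - ab s) * η) • w
    = (Real.sqrt (ab (s - 1)) / Real.sqrt (ab s)) •
          (xs - Ap.mulVec (A.mulVec xs))
        + ((Real.sqrt (1 - ab s) * Real.sqrt (1 - η ^ 2)) • e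
            - Real.sqrt ((1 - ab s) / (ab s / ab (s - 1))) •
                (e - Ap.mulVec (A.mulVec e))
            + Real.sqrt (ab (s - 1)) • Ap.mulVec y
            + (Real.sqrt (1 - ab s) * η) • w) := by
  have hks : Real.sqrt ((1 - ab s) / (ab s / ab (s - 1)))
      = Real.sqrt (ab (s - 1)) * Real.sqrt (1 - ab s) / Real.sqrt (ab s) := by
    have h1 : (1 - ab s) / (ab s / ab (s - 1)) = (1 - ab s) * (ab (s - 1) / ab s) := by
      field_simp
    rw [h1, Real.sqrt_mul' _ (le_of_lt (div_pos (hab _) (hab _))),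
      Real.sqrt_div' _ (le_of_lt (hab _))]
    ring
  rw [hks]
  simp only [Matrix.mulVec_smul, Matrix.mulVec_sub, smul_sub, smul_add, smul_smul]
  have hb : Real.sqrt (ab s) ≠ 0 := (Real.sqrt_pos.mpr (hab s)).ne'
  set a := Real.sqrt (ab (s - 1))
  set b := Real.sqrt (ab s)
  set c := Real.sqrt (1 - ab s)
  have h1 : a * (1 / b) = a / b := by ring
  have h2 : a * (1 / b * c) = a * c / b := by ring
  rw [h1, h2]
  abel
end

section
/- Let V be a real vector space, P : V → V a linear map with P ∘ P = P, c : ℕ → ℝ with c t ≠ 0 for every t, z : ℕ → V, and fix T ≥ 1 and x_T ∈ V. For a sequence x : ℕ → V with x T = x_T, the following are equivalent: (i) for every s with 1 ≤ s ≤ T, x (s-1) = (c (s-1)/c s) • (x s - P (x s)) + z s (sequential sampling); (ii) for every k with 1 ≤ k ≤ T, x (T-k) = (c (T-k)/c T) • (x_T - P x_T) + P (z (T-k+1)) + ∑_{s = T-k}^{T-1} (c (T-k)/c s) • (z (s+1) - P (z (s+1))) (i.e., (x_0, …, x_{T-1}) is a fixed point of the fully-lower-triangular parallel map F). -/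
noncomputable def parY {V : Type*} [AddCommGroup V] [Module ℝ V]
    (P : V →ₗ[ℝ] V) (c : ℕ → ℝ) (z : ℕ → V) (T : ℕ) (xT : V) (k : ℕ) : V :=
  (c (T - k) / c T) • (xT - P xT) + P (z (T - k + 1))
    + ∑ s ∈ Finset.Icc (T - k) (T - 1),
        (c (T - k) / c s) • (z (s + 1) - P (z (s + 1)))

lemma parY_sub_P {V : Type*} [AddCommGroup V] [Module ℝ V]
    (P : V →ₗ[ℝ] V) (c : ℕ → ℝ) (z : ℕ → V) (T : ℕ) (xT : V)
    (hP : P ∘ₗ P = P) (k : ℕ) :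
    parY P c z T xT k - P (parY P c z T xT k)
      = (c (T - k) / c T) • (xT - P xT)
        + ∑ s ∈ Finset.Icc (T - k) (T - 1),
            (c (T - k) / c s) • (z (s + 1) - P (z (s + 1))) := by
  have hPP : ∀ v, P (P v) = P v := fun v => LinearMap.congr_fun hP v
  simp only [parY, map_add, map_smul, map_sub, map_sum, hPP, sub_self, smul_zero,
    Finset.sum_const_zero]
  abel

lemma parY_one {V : Type*} [AddCommGroup V] [Module ℝ V]
    (P : V →ₗ[ℝ] V) (c : ℕ → ℝ) (z : ℕ → V) (T : ℕ) (xT : V)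
    (hc : ∀ t, c t ≠ 0) (hT : 1 ≤ T) :
    parY P c z T xT 1 = (c (T - 1) / c T) • (xT - P xT) + z T := by
  obtain ⟨m, rfl⟩ : ∃ m, T = m + 1 := ⟨T - 1, by omega⟩
  simp only [parY, Nat.add_sub_cancel, Finset.Icc_self, Finset.sum_singleton,
    div_self (hc m), one_smul]
  abel

lemma parY_key {V : Type*} [AddCommGroup V] [Module ℝ V]
    (P : V →ₗ[ℝ] V) (c : ℕ → ℝ) (z : ℕ → V) (T : ℕ) (xT : V)
    (hP : P ∘ₗ P = P) (hc : ∀ t, c t ≠ 0) {k : ℕ} (hk : k + 1 ≤ T) :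
    parY P c z T xT (k + 1)
      = (c (T - (k + 1)) / c (T - k)) •
          (parY P c z T xT k - P (parY P c z T xT k)) + z (T - k) := by
  obtain ⟨m, rfl⟩ : ∃ m, T = m + (k + 1) := ⟨T - (k + 1), by omega⟩
  rw [parY_sub_P _ _ _ _ _ hP]
  have e1 : m + (k + 1) - (k + 1) = m := by omega
  have e2 : m + (k + 1) - k = m + 1 := by omega
  have e3 : m + (k + 1) - 1 = m + k := by omega
  rw [e1, e2, e3]
  simp only [parY]
  rw [e1, e3]
  rw [← Finset.Ioc_insert_left (Nat.le_add_right m k),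
    Finset.sum_insert Finset.left_notMem_Ioc, div_self (hc m), one_smul,
    smul_add, smul_smul, ← Finset.Icc_add_one_left_eq_Ioc, Finset.smul_sum]
  have hsc : c m / c (m + 1) * (c (m + 1) / c (m + (k + 1))) = c m / c (m + (k + 1)) := by
    field_simp
    rw [mul_comm (c m), mul_div_mul_left _ _ (hc (m + 1))]
  rw [hsc]
  have hsum : ∀ s ∈ Finset.Icc (m + 1) (m + k),
      (c m / c (m + 1)) • ((c (m + 1) / c s) • (z (s + 1) - P (z (s + 1))))
        = (c m / c s) • (z (s + 1) - P (z (s + 1))) := by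
    intro s _
    rw [smul_smul]
    congr 1
    field_simp
    rw [mul_comm (c m), mul_div_mul_left _ _ (hc (m + 1))]
  rw [Finset.sum_congr rfl hsum]
  abel

/-- The fixed points of the fully-lower-triangular parallel sampling map are exactly
the trajectories of the sequential sampling recursion. -/
theorem sequential_iff_parallel_fixed_point
    {V : Type*} [AddCommGroup V] [Module ℝ V]
    (P : V →ₗ[ℝ] V) (hP : P ∘ₗ P = P)
    (c : ℕ → ℝ) (hc : ∀ t, c t ≠ 0)
    (z : ℕ → V) (T : ℕ) (hT : 1 ≤ T) (xT : V)
    (x : ℕ → V) (hxT : x T = xT) :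
    (∀ s : ℕ, 1 ≤ s → s ≤ T →
        x (s - 1) = (c (s - 1) / c s) • (x s - P (x s)) + z s)
    ↔ (∀ k : ℕ, 1 ≤ k → k ≤ T →
        x (T - k) =
          (c (T - k) / c T) • (xT - P xT) + P (z (T - k + 1))
            + ∑ s ∈ Finset.Icc (T - k) (T - 1),
                (c (T - k) / c s) • (z (s + 1) - P (z (s + 1)))) := by
  have main : (∀ s : ℕ, 1 ≤ s → s ≤ T →
        x (s - 1) = (c (s - 1) / c s) • (x s - P (x s)) + z s)
      ↔ (∀ k : ℕ, 1 ≤ k → k ≤ T → x (T - k) = parY P c z T xT k) := by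
    constructor
    · intro h k hk1 hkT
      induction k with
      | zero => omega
      | succ k ih =>
        rcases Nat.eq_zero_or_pos k with rfl | hk
        · have hb := h T hT le_rfl
          rw [hxT] at hb
          rw [parY_one P c z T xT hc hT]
          exact hb
        · have ih' := ih hk (by omega)
          have hs := h (T - k) (by omega) (by omega)
          have e : T - k - 1 = T - (k + 1) := by omega
          rw [e, ih'] at hs
          rw [parY_key P c z T xT hP hc hkT]
          exact hs
    · intro h s hs1 hsT
      rcases eq_or_lt_of_le hsT with rfl | hlt
      · have h1 := h 1 le_rfl hT
        rw [parY_one P c z s xT hc hT] at h1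
        rw [h1, hxT]
      · have hs0 : x (T - (T - s)) = parY P c z T xT (T - s) := h (T - s) (by omega) (by omega)
        have hs1' : x (T - (T - s + 1)) = parY P c z T xT (T - s + 1) :=
          h (T - s + 1) (by omega) (by omega)
        have e0 : T - (T - s) = s := by omega
        have e1 : T - (T - s + 1) = s - 1 := by omega
        have e2 : T - (T - s) = s := by omega
        rw [e0] at hs0
        rw [e1] at hs1'
        have hkey := parY_key P c z T xT hP hc (k := T - s) (by omega)
        rw [e1, e0] at hkey
        rw [hs1', hs0, hkey]
  exact main.trans Iff.rfl
end
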